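/- Let θ₀, θ_R ∈ S_{2π} and z ∈ ℂ \ σ(H_{θ₀,θ_R}). Then the generalized Dirichlet-to-Neumann map Λ_{θ₀,θ_R}(z) satisfies: (i) its diagonal entries are (Λ_{θ₀,θ_R}(z))_{1,1} = (−sin(θ₀) + cos(θ₀)u'_{+,θ_R}(z,0))/(cos(θ₀) + sin(θ₀)u'_{+,θ_R}(z,0)) and (Λ_{θ₀,θ_R}(z))_{2,2} = (−sin(θ_R) − cos(θ_R)u'_{−,θ₀}(z,R))/(cos(θ_R) − sin(θ_R)u'_{−,θ₀}(z,R)); (ii) its off-diagonal entries are equal: (Λ_{θ₀,θ_R}(z))_{1,2} = (Λ_{θ₀,θ_R}(z))_{2,1}, and both equal (−sin(θ₀)u_{−,θ₀}(z,0) + cos(θ₀)u'_{−,θ₀}(z,0))/(cos(θ_R) − sin(θ_R)u'_{−,θ₀}(z,R)) as well as (−sin(θ_R)u_{+,θ_R}(z,R) − cos(θ_R)u'_{+,θ_R}(z,R))/(cos(θ₀) + sin(θ₀)u'_{+,θ_R}(z,0)). -/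

import Mathlib

open MeasureTheory Set Complex Filter Matrix
open scoped Classical

noncomputable section

/-- The strip `S_{2π} = {z ∈ ℂ | 0 ≤ Re z < 2π}`. -/
def S2pi : Set ℂ := {z : ℂ | 0 ≤ z.re ∧ z.re < 2 * Real.pi}

/-- `u` (with derivative `u'`) solves the inhomogeneous Schrödinger equation
`-u'' + V u - z u = f` on `[0,R]`: `u` is differentiable with derivative `u'`
on `[0,R]`, and `u'` is absolutely continuous with `u'' = (V - z) u - f` (a.e.),
encoded in integrated form. -/
def IsSolInhom (R : ℝ) (V : ℝ → ℂ) (z : ℂ) (f u u' : ℝ → ℂ) : Prop :=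
  (∀ x ∈ Icc (0:ℝ) R, HasDerivAt u (u' x) x) ∧
  (∀ x ∈ Icc (0:ℝ) R, u' x = u' 0 + ∫ t in (0:ℝ)..x, ((V t - z) * u t - f t))

/-- `u` (with derivative `u'`) solves the homogeneous equation `-u'' + V u = z u`
on `[0,R]`. -/
def IsSol (R : ℝ) (V : ℝ → ℂ) (z : ℂ) (u u' : ℝ → ℂ) : Prop :=
  IsSolInhom R V z 0 u u'

/-- The boundary trace map `γ_{θ₀,θ_R}(u) ∈ ℂ²`. -/
def bTrace (R : ℝ) (θ0 θR : ℂ) (u u' : ℝ → ℂ) : Fin 2 → ℂ :=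
  ![Complex.cos θ0 * u 0 + Complex.sin θ0 * u' 0,
    Complex.cos θR * u R - Complex.sin θR * u' R]

/-- `z` is an eigenvalue of the Schrödinger operator `H_{θ₀,θ_R}` in `L²((0,R))`.
Since `H_{θ₀,θ_R}` has purely discrete spectrum, the spectrum `σ(H_{θ₀,θ_R})`
coincides with the set of its eigenvalues. -/
def IsEigenvalue (R : ℝ) (V : ℝ → ℂ) (θ0 θR z : ℂ) : Prop :=
  ∃ u u' : ℝ → ℂ, IsSol R V z u u' ∧ bTrace R θ0 θR u u' = 0 ∧
    ∃ x ∈ Icc (0:ℝ) R, u x ≠ 0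

/-- The boundary data map `Λ_{θ₀,θ_R}^{θ₀',θ_R'}(z) : ℂ² → ℂ²`: it sends the
`(θ₀,θ_R)`-boundary data of a solution of `-u'' + V u = z u` to its
`(θ₀',θ_R')`-boundary data.  (It is defined via a choice of solution; for
`z ∉ σ(H_{θ₀,θ_R})` the solution exists and is unique, so the map is well
defined there.) -/
def lambdaMap (R : ℝ) (V : ℝ → ℂ) (θ0 θR θ0' θR' z : ℂ) (c : Fin 2 → ℂ) :
    Fin 2 → ℂ :=
  if h : ∃ u : (ℝ → ℂ) × (ℝ → ℂ), IsSol R V z u.1 u.2 ∧ bTrace R θ0 θR u.1 u.2 = c then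
    bTrace R θ0' θR' h.choose.1 h.choose.2
  else 0

/-- The boundary data map `Λ_{θ₀,θ_R}^{θ₀',θ_R'}(z)` as a `2 × 2` complex matrix. -/
def lambdaMat (R : ℝ) (V : ℝ → ℂ) (θ0 θR θ0' θR' z : ℂ) :
    Matrix (Fin 2) (Fin 2) ℂ :=
  Matrix.of fun i j => lambdaMap R V θ0 θR θ0' θR' z (Pi.single j 1) i

/-- The diagonal matrix `S_{α,β} = diag(sin α, sin β)`. -/
def Smat (α β : ℂ) : Matrix (Fin 2) (Fin 2) ℂ :=
  Matrix.diagonal ![Complex.sin α, Complex.sin β]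

end

noncomputable section

/-- The generalized Dirichlet-to-Neumann map
`Λ_{θ₀,θ_R}(z) = Λ_{θ₀,θ_R}^{θ₀',θ_R'}(z)` with `θ₀' = (θ₀ + π/2) mod 2π` and
`θ_R' = (θ_R + π/2) mod 2π`.  (Since `cos` and `sin` are `2π`-periodic, the
boundary trace map, and hence the boundary data map, is unchanged by reduction
mod `2π`, so we may simply use `θ₀ + π/2`, `θ_R + π/2`.) -/
def lambdaDMat (R : ℝ) (V : ℝ → ℂ) (θ0 θR z : ℂ) : Matrix (Fin 2) (Fin 2) ℂ :=
  lambdaMat R V θ0 θR (θ0 + (Real.pi : ℂ) / 2) (θR + (Real.pi : ℂ) / 2) z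

end


noncomputable section AuxLemmas

variable {R : ℝ} {V : ℝ → ℂ} {z : ℂ}

lemma isSol_deriv_eq {u u' : ℝ → ℂ} (h : IsSol R V z u u') {x : ℝ}
    (hx : x ∈ Icc (0:ℝ) R) :
    u' x = u' 0 + ∫ t in (0:ℝ)..x, (V t - z) * u t := by
  have := h.2 x hx
  simpa using this

lemma IsSol.contOn {u u' : ℝ → ℂ} (h : IsSol R V z u u') :
    ContinuousOn u (Icc 0 R) := fun x hx => (h.1 x hx).continuousAt.continuousWithinAt

/-- Product of an integrable function and a continuous function is integrable. -/
lemma integrableOn_mul_cont {g w : ℝ → ℂ} (hg : IntegrableOn g (Ioc 0 R))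
    (hw : ContinuousOn w (Icc 0 R)) (hR : 0 ≤ R) :
    IntegrableOn (fun t => g t * w t) (Ioc 0 R) := by
  obtain ⟨C, hC⟩ := (isCompact_Icc (a := (0:ℝ)) (b := R)).exists_bound_of_continuousOn hw
  refine Integrable.mono' (hg.norm.mul_const C) ?_ ?_
  · exact hg.aestronglyMeasurable.mul
      ((hw.mono Ioc_subset_Icc_self).aestronglyMeasurable measurableSet_Ioc)
  · filter_upwards [ae_restrict_mem measurableSet_Ioc] with t ht
    rw [norm_mul]
    exact mul_le_mul_of_nonneg_left (hC t (Ioc_subset_Icc_self ht)) (norm_nonneg _)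

lemma integrableOn_Vz (hV : IntegrableOn V (Ioo 0 R)) :
    IntegrableOn (fun t => V t - z) (Ioc 0 R) := by
  rw [integrableOn_Ioc_iff_integrableOn_Ioo]
  exact hV.sub (integrableOn_const measure_Ioo_lt_top.ne)

lemma integrableOn_g (hR : 0 ≤ R) (hV : IntegrableOn V (Ioo 0 R)) {u u' : ℝ → ℂ}
    (h : IsSol R V z u u') :
    IntegrableOn (fun t => (V t - z) * u t) (Ioc 0 R) :=
  integrableOn_mul_cont (integrableOn_Vz hV) h.contOn hR

lemma intervalIntegrable_g (hR : 0 ≤ R) (hV : IntegrableOn V (Ioo 0 R)) {u u' : ℝ → ℂ}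
    (h : IsSol R V z u u') :
    IntervalIntegrable (fun t => (V t - z) * u t) volume 0 R :=
  (intervalIntegrable_iff_integrableOn_Ioc_of_le hR).2 (integrableOn_g hR hV h)

lemma contOn_deriv (hR : 0 ≤ R) (hV : IntegrableOn V (Ioo 0 R)) {u u' : ℝ → ℂ}
    (h : IsSol R V z u u') : ContinuousOn u' (Icc 0 R) := by
  have hcont : ContinuousOn (fun x => u' 0 + ∫ t in (0:ℝ)..x, (V t - z) * u t)
      (Icc 0 R) := by
    apply continuousOn_const.add
    have h2 := intervalIntegral.continuousOn_primitive_interval'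
      (intervalIntegrable_g hR hV h) (by rw [uIcc_of_le hR]; exact left_mem_Icc.2 hR)
    rwa [uIcc_of_le hR] at h2
  exact hcont.congr fun x hx => isSol_deriv_eq h hx

lemma ftc {u u' : ℝ → ℂ} (h : IsSol R V z u u') (hR : 0 ≤ R)
    (hV : IntegrableOn V (Ioo 0 R)) {s : ℝ} (hs : s ∈ Icc (0:ℝ) R) :
    ∫ t in s..R, u' t = u R - u s := by
  have hsub : uIcc s R ⊆ Icc 0 R := by
    rw [uIcc_of_le hs.2]; exact Icc_subset_Icc hs.1 le_rfl
  exact intervalIntegral.integral_eq_sub_of_hasDerivAt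
    (fun x hx => h.1 x (hsub hx))
    (((contOn_deriv hR hV h).mono hsub).intervalIntegrable)

/-- Fubini on the triangle. -/
lemma fubini_triangle (hR : 0 < R) (hV : IntegrableOn V (Ioo 0 R)) {g w w' : ℝ → ℂ}
    (hg : IntegrableOn g (Ioc 0 R)) (hw : IsSol R V z w w') :
    ∫ t in (0:ℝ)..R, w' t * (∫ s in (0:ℝ)..t, g s)
      = ∫ s in (0:ℝ)..R, g s * (w R - w s) := by
  set μ := volume.restrict (Ioc (0:ℝ) R) with hμ
  have hw' : ContinuousOn w' (Icc 0 R) := contOn_deriv hR.le hV hw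
  have hw'int : IntegrableOn w' (Ioc 0 R) :=
    (hw'.integrableOn_Icc).mono_set Ioc_subset_Icc_self
  have hF : Integrable (fun p : ℝ × ℝ => if p.2 ≤ p.1 then w' p.1 * g p.2 else 0)
      (μ.prod μ) := by
    have hbase : Integrable (fun p : ℝ × ℝ => w' p.1 * g p.2) (μ.prod μ) :=
      hw'int.mul_prod hg
    have hmeas : MeasurableSet {p : ℝ × ℝ | p.2 ≤ p.1} :=
      (isClosed_le continuous_snd continuous_fst).measurableSet
    have := hbase.indicator hmeas
    exact this.congr (Filter.Eventually.of_forall fun p => by simp [Set.indicator_apply])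
  have h1 : ∫ t in (0:ℝ)..R, w' t * (∫ s in (0:ℝ)..t, g s)
      = ∫ t, (∫ s, (if s ≤ t then w' t * g s else 0) ∂μ) ∂μ := by
    rw [intervalIntegral.integral_of_le hR.le]
    refine setIntegral_congr_fun measurableSet_Ioc fun t ht => ?_
    have heq : (fun s => if s ≤ t then w' t * g s else 0)
        = (Iic t).indicator (fun s => w' t * g s) := by
      funext s; simp [Set.indicator_apply]
    rw [heq, integral_indicator measurableSet_Iic, hμ,
      Measure.restrict_restrict measurableSet_Iic]
    have hset : Iic t ∩ Ioc 0 R = Ioc 0 t := by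
      rw [inter_comm, Ioc_inter_Iic, min_eq_right ht.2]
    rw [hset, MeasureTheory.integral_const_mul, intervalIntegral.integral_of_le ht.1.le]
  have h2 : ∫ s, (∫ t, (if s ≤ t then w' t * g s else 0) ∂μ) ∂μ
      = ∫ s in (0:ℝ)..R, g s * (w R - w s) := by
    rw [intervalIntegral.integral_of_le hR.le]
    refine setIntegral_congr_fun measurableSet_Ioc fun s hs => ?_
    have heq : (fun t => if s ≤ t then w' t * g s else 0)
        = (Ici s).indicator (fun t => w' t * g s) := by
      funext t; simp [Set.indicator_apply]
    rw [heq, integral_indicator measurableSet_Ici, hμ,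
      Measure.restrict_restrict measurableSet_Ici]
    have hset : Ici s ∩ Ioc 0 R = Icc s R := by
      ext t
      simp only [mem_inter_iff, mem_Ici, mem_Ioc, mem_Icc]
      constructor
      · rintro ⟨h1, _, h3⟩; exact ⟨h1, h3⟩
      · rintro ⟨h1, h2⟩; exact ⟨h1, lt_of_lt_of_le hs.1 h1, h2⟩
    rw [hset, integral_mul_const, integral_Icc_eq_integral_Ioc,
      ← intervalIntegral.integral_of_le hs.2,
      ftc hw hR.le hV (Ioc_subset_Icc_self hs), mul_comm]
  rw [h1, integral_integral_swap hF, h2]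

/-- Integration by parts identity. -/
lemma key_parts (hR : 0 < R) (hV : IntegrableOn V (Ioo 0 R))
    {u u' v v' : ℝ → ℂ} (hu : IsSol R V z u u') (hv : IsSol R V z v v') :
    u R * v' R - u 0 * v' 0
      = (∫ t in (0:ℝ)..R, u' t * v' t) + ∫ t in (0:ℝ)..R, u t * ((V t - z) * v t) := by
  set gv := fun t => (V t - z) * v t with hgv
  set Hv := fun x => ∫ s in (0:ℝ)..x, gv s with hHv
  have hgvI : IntegrableOn gv (Ioc 0 R) := integrableOn_g hR.le hV hv
  have hgvII : IntervalIntegrable gv volume 0 R := intervalIntegrable_g hR.le hV hv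
  have hu' : ContinuousOn u' (Icc 0 R) := contOn_deriv hR.le hV hu
  have hHvcont : ContinuousOn Hv (Icc 0 R) := by
    have := intervalIntegral.continuousOn_primitive_interval'
      hgvII (by rw [uIcc_of_le hR.le]; exact left_mem_Icc.2 hR.le)
    rwa [uIcc_of_le hR.le] at this
  have e1 : v' R = v' 0 + Hv R := isSol_deriv_eq hv (right_mem_Icc.2 hR.le)
  have e2 : ∫ t in (0:ℝ)..R, u' t = u R - u 0 :=
    ftc hu hR.le hV (left_mem_Icc.2 hR.le)
  have e3 : ∫ t in (0:ℝ)..R, u' t * Hv t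
      = ∫ s in (0:ℝ)..R, gv s * (u R - u s) := fubini_triangle hR hV hgvI hu
  have e3' : ∫ s in (0:ℝ)..R, gv s * (u R - u s)
      = u R * Hv R - ∫ s in (0:ℝ)..R, u s * gv s := by
    have hsplit : (fun s => gv s * (u R - u s))
        = fun s => u R * gv s - gv s * u s := by funext s; ring
    rw [hsplit, intervalIntegral.integral_sub (hgvII.const_mul _)
      ((intervalIntegrable_iff_integrableOn_Ioc_of_le hR.le).2
        (integrableOn_mul_cont hgvI hu.contOn hR.le)),
      intervalIntegral.integral_const_mul]
    congr 1
    refine intervalIntegral.integral_congr fun s hs => ?_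
    ring
  have e4 : ∫ t in (0:ℝ)..R, u' t * v' t
      = (v' 0 * ∫ t in (0:ℝ)..R, u' t) + ∫ t in (0:ℝ)..R, u' t * Hv t := by
    have hcongr : EqOn (fun t => u' t * v' t)
        (fun t => v' 0 * u' t + u' t * Hv t) (uIcc 0 R) := by
      intro t ht
      rw [uIcc_of_le hR.le] at ht
      simp only
      rw [isSol_deriv_eq hv ht]
      ring
    rw [intervalIntegral.integral_congr hcongr,
      intervalIntegral.integral_add
        ((hu'.intervalIntegrable_of_Icc hR.le).const_mul _)
        ((hu'.mul hHvcont).intervalIntegrable_of_Icc hR.le :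
            IntervalIntegrable (fun t => u' t * Hv t) volume 0 R),
      intervalIntegral.integral_const_mul]
  have e5 : ∫ s in (0:ℝ)..R, u s * gv s = ∫ t in (0:ℝ)..R, u t * ((V t - z) * v t) :=
    rfl
  rw [e3'] at e3
  rw [e4, e3, e5.symm]
  rw [e1, e2]
  ring

/-- Constancy of the Wronskian. -/
lemma wronskian_const (hR : 0 < R) (hV : IntegrableOn V (Ioo 0 R))
    {up up' um um' : ℝ → ℂ} (hup : IsSol R V z up up') (hum : IsSol R V z um um') :
    up R * um' R - up' R * um R = up 0 * um' 0 - up' 0 * um 0 := by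
  have k1 := key_parts hR hV hup hum
  have k2 := key_parts hR hV hum hup
  have h12 : ∫ t in (0:ℝ)..R, up' t * um' t = ∫ t in (0:ℝ)..R, um' t * up' t :=
    intervalIntegral.integral_congr fun t _ => mul_comm _ _
  have h34 : ∫ t in (0:ℝ)..R, up t * ((V t - z) * um t)
      = ∫ t in (0:ℝ)..R, um t * ((V t - z) * up t) :=
    intervalIntegral.integral_congr fun t _ => by ring
  linear_combination k1 - k2 + h12 + h34

lemma IsSol.smul {u u' : ℝ → ℂ} (h : IsSol R V z u u') (c : ℂ) :
    IsSol R V z (fun x => c * u x) (fun x => c * u' x) := by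
  constructor
  · intro x hx; exact (h.1 x hx).const_mul c
  · intro x hx
    have h1 := h.2 x hx
    simp only [Pi.zero_apply, sub_zero] at h1 ⊢
    have h2 : ∫ t in (0:ℝ)..x, (V t - z) * (c * u t)
        = c * ∫ t in (0:ℝ)..x, (V t - z) * u t := by
      rw [← intervalIntegral.integral_const_mul]
      exact intervalIntegral.integral_congr fun t _ => by ring
    rw [h2, h1]
    ring

/-- Uniqueness of boundary values of solutions with equal boundary trace, away
from eigenvalues. -/
lemma unique_boundary (hR : 0 < R) (hV : IntegrableOn V (Ioo 0 R)) {θ0 θR : ℂ}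
    (hz : ¬ IsEigenvalue R V θ0 θR z) {u u' v v' : ℝ → ℂ}
    (hu : IsSol R V z u u') (hv : IsSol R V z v v')
    (hb : bTrace R θ0 θR u u' = bTrace R θ0 θR v v') :
    u 0 = v 0 ∧ u' 0 = v' 0 ∧ u R = v R ∧ u' R = v' R := by
  set w := fun x => u x - v x with hwdef
  set w' := fun x => u' x - v' x with hw'def
  have hw : IsSol R V z w w' := by
    constructor
    · intro x hx; exact (hu.1 x hx).sub (hv.1 x hx)
    · intro x hx
      have h1 := hu.2 x hx
      have h2 := hv.2 x hx
      simp only [Pi.zero_apply, sub_zero] at h1 h2 ⊢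
      have hi1 : IntervalIntegrable (fun t => (V t - z) * u t) volume 0 x :=
        (intervalIntegrable_g hR.le hV hu).mono_set
          (by rw [uIcc_of_le hx.1, uIcc_of_le hR.le]; exact Icc_subset_Icc le_rfl hx.2)
      have hi2 : IntervalIntegrable (fun t => (V t - z) * v t) volume 0 x :=
        (intervalIntegrable_g hR.le hV hv).mono_set
          (by rw [uIcc_of_le hx.1, uIcc_of_le hR.le]; exact Icc_subset_Icc le_rfl hx.2)
      have h3 : ∫ t in (0:ℝ)..x, (V t - z) * (u t - v t)
          = (∫ t in (0:ℝ)..x, (V t - z) * u t) - ∫ t in (0:ℝ)..x, (V t - z) * v t := by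
        rw [← intervalIntegral.integral_sub hi1 hi2]
        exact intervalIntegral.integral_congr fun t _ => by ring
      simp only [hwdef, hw'def]
      rw [h3, h1, h2]
      ring
  have hwb : bTrace R θ0 θR w w' = 0 := by
    funext i
    have hb0 := congrFun hb 0
    have hb1 := congrFun hb 1
    simp only [bTrace, Matrix.cons_val_zero, Matrix.cons_val_one, Matrix.head_cons] at hb0 hb1
    fin_cases i
    · show Complex.cos θ0 * w 0 + Complex.sin θ0 * w' 0 = 0
      simp only [hwdef, hw'def]
      linear_combination hb0
    · show Complex.cos θR * w R - Complex.sin θR * w' R = 0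
      simp only [hwdef, hw'def]
      linear_combination hb1
  have hw0 : ∀ x ∈ Icc (0:ℝ) R, w x = 0 := by
    by_contra hc
    push_neg at hc
    obtain ⟨x, hx, hxne⟩ := hc
    exact hz ⟨w, w', hw, hwb, x, hx, hxne⟩
  have hw'0 : ∀ x ∈ Ioo (0:ℝ) R, w' x = 0 := by
    intro x hx
    have h1 : HasDerivAt w (w' x) x := hw.1 x (Ioo_subset_Icc_self hx)
    have h2 : HasDerivAt w 0 x := by
      have hev : w =ᶠ[nhds x] (fun _ => (0:ℂ)) := by
        filter_upwards [Icc_mem_nhds hx.1 hx.2] with y hy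
        exact hw0 y hy
      exact (hasDerivAt_const x (0:ℂ)).congr_of_eventuallyEq hev
    exact h1.unique h2
  have hconst : ∀ x ∈ Icc (0:ℝ) R, w' x = w' 0 := by
    intro x hx
    have h1 := hw.2 x hx
    simp only [Pi.zero_apply, sub_zero] at h1
    have h2 : ∫ t in (0:ℝ)..x, (V t - z) * w t = 0 := by
      have : EqOn (fun t => (V t - z) * w t) (fun _ => (0:ℂ)) (uIcc 0 x) := by
        intro t ht
        rw [uIcc_of_le hx.1] at ht
        simp only
        rw [hw0 t (Icc_subset_Icc le_rfl hx.2 ht), mul_zero]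
      rw [intervalIntegral.integral_congr this, intervalIntegral.integral_zero]
    rw [h1, h2, add_zero]
  have hmem : R/2 ∈ Ioo (0:ℝ) R := ⟨by linarith, by linarith⟩
  have hw'00 : w' 0 = 0 := by
    have := hconst (R/2) (Ioo_subset_Icc_self hmem)
    rw [hw'0 (R/2) hmem] at this
    exact this.symm
  have hw'R : w' R = 0 := by
    rw [hconst R (right_mem_Icc.2 hR.le), hw'00]
  refine ⟨sub_eq_zero.mp (hw0 0 (left_mem_Icc.2 hR.le)), sub_eq_zero.mp hw'00,
    sub_eq_zero.mp (hw0 R (right_mem_Icc.2 hR.le)), sub_eq_zero.mp hw'R⟩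

lemma lambdaMap_eq (hR : 0 < R) (hV : IntegrableOn V (Ioo 0 R)) {θ0 θR : ℂ}
    (hz : ¬ IsEigenvalue R V θ0 θR z) {u u' : ℝ → ℂ} (hu : IsSol R V z u u')
    {c : Fin 2 → ℂ} (hbc : bTrace R θ0 θR u u' = c) (θ0' θR' : ℂ) :
    lambdaMap R V θ0 θR θ0' θR' z c = bTrace R θ0' θR' u u' := by
  have hex : ∃ p : (ℝ → ℂ) × (ℝ → ℂ), IsSol R V z p.1 p.2 ∧
      bTrace R θ0 θR p.1 p.2 = c := ⟨(u, u'), hu, hbc⟩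
  unfold lambdaMap
  rw [dif_pos hex]
  obtain ⟨h1, h2⟩ := hex.choose_spec
  obtain ⟨e0, e0', eR, eR'⟩ := unique_boundary hR hV hz h1 hu (h2.trans hbc.symm)
  generalize hex.choose = p at e0 e0' eR eR' ⊢
  unfold bTrace
  rw [e0, e0', eR, eR']

lemma pi_single_zero_eq : (Pi.single (0 : Fin 2) (1:ℂ)) = ![1, 0] := by
  funext i
  fin_cases i <;> simp [Pi.single_apply]

lemma pi_single_one_eq : (Pi.single (1 : Fin 2) (1:ℂ)) = ![0, 1] := by
  funext i
  fin_cases i <;> simp [Pi.single_apply]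

end AuxLemmas

/-- Entries of the generalized Dirichlet-to-Neumann map
`Λ_{θ₀,θ_R}(z)` in terms of the distinguished basis `u₊ = u_{+,θ_R}(z,·)`,
`u₋ = u_{−,θ₀}(z,·)`: the diagonal entries are the displayed quotients, and the
two off-diagonal entries coincide and are given by either of the two displayed
quotients. -/
theorem dirichlet_to_neumann_entries
    (R : ℝ) (hR : 0 < R) (V : ℝ → ℂ) (hV : IntegrableOn V (Ioo 0 R))
    (θ0 θR : ℂ) (hθ0 : θ0 ∈ S2pi) (hθR : θR ∈ S2pi)
    (z : ℂ) (hz : ¬ IsEigenvalue R V θ0 θR z)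
    (up up' um um' : ℝ → ℂ)
    (hup : IsSol R V z up up') (hup0 : up 0 = 1)
    (hupR : Complex.cos θR * up R - Complex.sin θR * up' R = 0)
    (hum : IsSol R V z um um') (humR : um R = 1)
    (hum0 : Complex.cos θ0 * um 0 + Complex.sin θ0 * um' 0 = 0) :
    lambdaDMat R V θ0 θR z 0 0 =
      (-Complex.sin θ0 + Complex.cos θ0 * up' 0) /
        (Complex.cos θ0 + Complex.sin θ0 * up' 0) ∧
    lambdaDMat R V θ0 θR z 1 1 =
      (-Complex.sin θR - Complex.cos θR * um' R) /
        (Complex.cos θR - Complex.sin θR * um' R) ∧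
    lambdaDMat R V θ0 θR z 0 1 = lambdaDMat R V θ0 θR z 1 0 ∧
    lambdaDMat R V θ0 θR z 0 1 =
      (-Complex.sin θ0 * um 0 + Complex.cos θ0 * um' 0) /
        (Complex.cos θR - Complex.sin θR * um' R) ∧
    lambdaDMat R V θ0 θR z 0 1 =
      (-Complex.sin θR * up R - Complex.cos θR * up' R) /
        (Complex.cos θ0 + Complex.sin θ0 * up' 0) := by
  set c0 : ℂ := Complex.cos θ0 + Complex.sin θ0 * up' 0 with hc0
  set cR : ℂ := Complex.cos θR - Complex.sin θR * um' R with hcR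
  have hden0 : c0 ≠ 0 := by
    intro h
    apply hz
    refine ⟨up, up', hup, ?_, 0, left_mem_Icc.2 hR.le, by rw [hup0]; exact one_ne_zero⟩
    funext i
    fin_cases i
    · show Complex.cos θ0 * up 0 + Complex.sin θ0 * up' 0 = 0
      rw [hup0, mul_one, ← hc0]
      exact h
    · show Complex.cos θR * up R - Complex.sin θR * up' R = 0
      exact hupR
  have hdenR : cR ≠ 0 := by
    intro h
    apply hz
    refine ⟨um, um', hum, ?_, R, right_mem_Icc.2 hR.le, by rw [humR]; exact one_ne_zero⟩
    funext i
    fin_cases i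
    · show Complex.cos θ0 * um 0 + Complex.sin θ0 * um' 0 = 0
      exact hum0
    · show Complex.cos θR * um R - Complex.sin θR * um' R = 0
      rw [humR, mul_one, ← hcR]
      exact h
  have hb0 : bTrace R θ0 θR (fun x => c0⁻¹ * up x) (fun x => c0⁻¹ * up' x)
      = Pi.single 0 1 := by
    rw [pi_single_zero_eq]
    funext i
    fin_cases i
    · show Complex.cos θ0 * (c0⁻¹ * up 0) + Complex.sin θ0 * (c0⁻¹ * up' 0) = (1:ℂ)
      rw [hup0, mul_one]
      field_simp
      exact hc0.symm
    · show Complex.cos θR * (c0⁻¹ * up R) - Complex.sin θR * (c0⁻¹ * up' R) = (0:ℂ)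
      linear_combination c0⁻¹ * hupR
  have hbR : bTrace R θ0 θR (fun x => cR⁻¹ * um x) (fun x => cR⁻¹ * um' x)
      = Pi.single 1 1 := by
    rw [pi_single_one_eq]
    funext i
    fin_cases i
    · show Complex.cos θ0 * (cR⁻¹ * um 0) + Complex.sin θ0 * (cR⁻¹ * um' 0) = (0:ℂ)
      linear_combination cR⁻¹ * hum0
    · show Complex.cos θR * (cR⁻¹ * um R) - Complex.sin θR * (cR⁻¹ * um' R) = (1:ℂ)
      rw [humR, mul_one]
      field_simp
      exact hcR.symm
  have hmap0 := lambdaMap_eq hR hV hz (hup.smul c0⁻¹) hb0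
    (θ0 + (Real.pi : ℂ) / 2) (θR + (Real.pi : ℂ) / 2)
  have hmapR := lambdaMap_eq hR hV hz (hum.smul cR⁻¹) hbR
    (θ0 + (Real.pi : ℂ) / 2) (θR + (Real.pi : ℂ) / 2)
  have hE : ∀ i j : Fin 2, lambdaDMat R V θ0 θR z i j
      = lambdaMap R V θ0 θR (θ0 + (Real.pi : ℂ) / 2) (θR + (Real.pi : ℂ) / 2) z
          (Pi.single j 1) i := fun i j => rfl
  have e00 : lambdaDMat R V θ0 θR z 0 0
      = (-Complex.sin θ0 + Complex.cos θ0 * up' 0) / c0 := by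
    rw [hE 0 0, hmap0]
    show Complex.cos (θ0 + (Real.pi : ℂ) / 2) * (c0⁻¹ * up 0)
        + Complex.sin (θ0 + (Real.pi : ℂ) / 2) * (c0⁻¹ * up' 0) = _
    rw [Complex.cos_add_pi_div_two, Complex.sin_add_pi_div_two, hup0, mul_one]
    field_simp
  have e10 : lambdaDMat R V θ0 θR z 1 0
      = (-Complex.sin θR * up R - Complex.cos θR * up' R) / c0 := by
    rw [hE 1 0, hmap0]
    show Complex.cos (θR + (Real.pi : ℂ) / 2) * (c0⁻¹ * up R)
        - Complex.sin (θR + (Real.pi : ℂ) / 2) * (c0⁻¹ * up' R) = _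
    rw [Complex.cos_add_pi_div_two, Complex.sin_add_pi_div_two]
    field_simp
  have e01 : lambdaDMat R V θ0 θR z 0 1
      = (-Complex.sin θ0 * um 0 + Complex.cos θ0 * um' 0) / cR := by
    rw [hE 0 1, hmapR]
    show Complex.cos (θ0 + (Real.pi : ℂ) / 2) * (cR⁻¹ * um 0)
        + Complex.sin (θ0 + (Real.pi : ℂ) / 2) * (cR⁻¹ * um' 0) = _
    rw [Complex.cos_add_pi_div_two, Complex.sin_add_pi_div_two]
    field_simp
  have e11 : lambdaDMat R V θ0 θR z 1 1
      = (-Complex.sin θR - Complex.cos θR * um' R) / cR := by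
    rw [hE 1 1, hmapR]
    show Complex.cos (θR + (Real.pi : ℂ) / 2) * (cR⁻¹ * um R)
        - Complex.sin (θR + (Real.pi : ℂ) / 2) * (cR⁻¹ * um' R) = _
    rw [Complex.cos_add_pi_div_two, Complex.sin_add_pi_div_two, humR, mul_one]
    field_simp
  have wr : up R * um' R - up' R = um' 0 - up' 0 * um 0 := by
    have := wronskian_const hR hV hup hum
    rw [hup0, humR, one_mul, mul_one] at this
    exact this
  have hA : (-Complex.sin θ0 * um 0 + Complex.cos θ0 * um' 0) * c0
      = um' 0 - um 0 * up' 0 := by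
    rw [hc0]
    linear_combination (up' 0 * Complex.cos θ0 - Complex.sin θ0) * hum0
      + (um' 0 - um 0 * up' 0) * Complex.sin_sq_add_cos_sq θ0
  have hB : (-Complex.sin θR * up R - Complex.cos θR * up' R) * cR
      = up R * um' R - up' R := by
    rw [hcR]
    linear_combination (-(Complex.sin θR + um' R * Complex.cos θR)) * hupR
      + (up R * um' R - up' R) * Complex.sin_sq_add_cos_sq θR
  have hAB : (-Complex.sin θ0 * um 0 + Complex.cos θ0 * um' 0) / cR
      = (-Complex.sin θR * up R - Complex.cos θR * up' R) / c0 := by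
    rw [div_eq_div_iff hdenR hden0, hA, hB]
    linear_combination - wr
  refine ⟨e00, e11, ?_, e01, ?_⟩
  · rw [e01, e10]
    exact hAB
  · rw [e01]
    rw [hAB]
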